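/- For even ℓ and 0 ≤ b, c ≤ ℓ, define M^n_H(b,c) = Σ_{j+j'=c} C(b,j)((1+ρⁿ)/2)^j((1−ρⁿ)/2)^{b−j} · C(ℓ−b,j')((1−ρⁿ)/2)^{j'}((1+ρⁿ)/2)^{ℓ−b−j'}, the probability that the sum of two independent binomial random variables with parameters (b,(1+ρⁿ)/2) and (ℓ−b,(1−ρⁿ)/2) equals c, where ρ = 1−2q. Then for every fixed n ≥ 1 and a ≥ 0, along any sequences ℓ_m → ∞ (ℓ_m even), q_m → 0 with ℓ_m q_m → a, we have M^n_H(ℓ_m/2, ℓ_m/2) → φ_n(a) = e^{−an} Σ_{k≥0} (an)^{2k}/(2^{2k}(k!)²). -/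

import Mathlib

open scoped BigOperators
open Filter Topology

/-- `MH ℓ ρ n b c` is the probability that the sum of two independent binomial
random variables with parameters `(b, (1+ρⁿ)/2)` and `(ℓ-b, (1-ρⁿ)/2)`
equals `c`, written as the explicit convolution sum
`∑_{j+j'=c} C(b,j)((1+ρⁿ)/2)^j((1-ρⁿ)/2)^{b-j} ·
C(ℓ-b,j')((1-ρⁿ)/2)^{j'}((1+ρⁿ)/2)^{ℓ-b-j'}`. -/
noncomputable def MH (ℓ : ℕ) (ρ : ℝ) (n : ℕ) (b c : ℕ) : ℝ :=
  ∑ j ∈ Finset.range (c + 1),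
    (Nat.choose b j : ℝ) * ((1 + ρ ^ n) / 2) ^ j * ((1 - ρ ^ n) / 2) ^ (b - j) *
      ((Nat.choose (ℓ - b) (c - j) : ℝ) * ((1 - ρ ^ n) / 2) ^ (c - j) *
        ((1 + ρ ^ n) / 2) ^ (ℓ - b - (c - j)))

lemma MH_two_mul (L : ℕ) (ρ : ℝ) (n : ℕ) :
    MH (2 * L) ρ n L L =
      ∑ k ∈ Finset.range (L + 1),
        (Nat.choose L k : ℝ) ^ 2 * ((1 - ρ ^ n) / 2) ^ (2 * k) *
          ((1 + ρ ^ n) / 2) ^ (2 * (L - k)) := by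
  rw [MH, ← Finset.sum_range_reflect (fun k => (Nat.choose L k : ℝ) ^ 2 *
      ((1 - ρ ^ n) / 2) ^ (2 * k) * ((1 + ρ ^ n) / 2) ^ (2 * (L - k))) (L + 1)]
  refine Finset.sum_congr rfl fun j hj => ?_
  rw [Finset.mem_range] at hj
  have hjL : j ≤ L := Nat.lt_succ_iff.mp hj
  have h1 : 2 * L - L = L := by omega
  have h2 : L + 1 - 1 - j = L - j := by omega
  have h3 : L - (L - j) = j := Nat.sub_sub_self hjL
  have h4 : Nat.choose L (L - j) = Nat.choose L j := Nat.choose_symm hjL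
  simp only [h1, h2, h3, h4]
  ring

lemma key_tendsto (lam : ℝ) (hlam : 0 ≤ lam) (L : ℕ → ℕ) (ε : ℕ → ℝ)
    (hε0 : ∀ m, 0 < ε m) (hε1 : ∀ m, ε m < 1)
    (hL : Tendsto L atTop atTop)
    (hLε : Tendsto (fun m => (L m : ℝ) * ε m) atTop (𝓝 lam)) :
    Tendsto (fun m => ∑ k ∈ Finset.range (L m + 1),
        (Nat.choose (L m) k : ℝ) ^ 2 * (ε m) ^ (2 * k) * (1 - ε m) ^ (2 * (L m - k)))
      atTop (𝓝 (∑' k : ℕ, (lam ^ k / Nat.factorial k) ^ 2 * Real.exp (-(2 * lam)))) := by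
  -- ε → 0
  have hLtop : Tendsto (fun m => (L m : ℝ)) atTop atTop :=
    tendsto_natCast_atTop_atTop.comp hL
  have hεtend : Tendsto ε atTop (𝓝 0) := by
    have hinv : Tendsto (fun m => ((L m : ℝ))⁻¹) atTop (𝓝 0) :=
      tendsto_inv_atTop_zero.comp hLtop
    have := hLε.mul hinv
    rw [mul_zero] at this
    refine this.congr' ?_
    filter_upwards [hL.eventually_ge_atTop 1] with m hm
    have : (L m : ℝ) ≠ 0 := by positivity
    field_simp
  set F : ℕ → ℕ → ℝ := fun m k => if k ≤ L m then
    (Nat.choose (L m) k : ℝ) ^ 2 * (ε m) ^ (2 * k) * (1 - ε m) ^ (2 * (L m - k)) else 0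
    with hF
  have hFsum : ∀ m, ∑ k ∈ Finset.range (L m + 1),
      (Nat.choose (L m) k : ℝ) ^ 2 * (ε m) ^ (2 * k) * (1 - ε m) ^ (2 * (L m - k))
      = ∑' k, F m k := by
    intro m
    rw [tsum_eq_sum (s := Finset.range (L m + 1)) (fun k hk => by
      simp only [Finset.mem_range, not_lt] at hk
      exact if_neg (by omega))]
    exact Finset.sum_congr rfl fun k hk =>
      (if_pos (Nat.lt_succ_iff.mp (Finset.mem_range.mp hk))).symm
  simp only [hFsum]
  apply tendsto_tsum_of_dominated_convergence
    (bound := fun k => ((lam + 1) ^ 2) ^ k / Nat.factorial k)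
  · exact Real.summable_pow_div_factorial ((lam + 1) ^ 2)
  · -- pointwise limits
    intro k
    -- limit of choose * ε^k
    have hCε : Tendsto (fun m => (Nat.choose (L m) k : ℝ) * ε m ^ k) atTop
        (𝓝 (lam ^ k / Nat.factorial k)) := by
      have hprod : Tendsto (fun m => (∏ i ∈ Finset.range k, (((L m : ℝ) - i) * ε m)))
          atTop (𝓝 (lam ^ k)) := by
        have : Tendsto (fun m => (∏ i ∈ Finset.range k, (((L m : ℝ) - i) * ε m)))
            atTop (𝓝 (∏ _i ∈ Finset.range k, lam)) := by
          refine tendsto_finset_prod _ fun i _ => ?_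
          have : Tendsto (fun m => (L m : ℝ) * ε m - (i : ℝ) * ε m) atTop (𝓝 (lam - i * 0)) :=
            hLε.sub (hεtend.const_mul (i : ℝ))
          rw [mul_zero, sub_zero] at this
          refine this.congr fun m => by ring
        simpa using this
      have := hprod.div_const (Nat.factorial k : ℝ)
      refine this.congr' ?_
      filter_upwards [hL.eventually_ge_atTop k] with m hm
      have hdesc : (((L m).descFactorial k : ℕ) : ℝ)
          = ∏ i ∈ Finset.range k, ((L m : ℝ) - i) := by
        rw [Nat.descFactorial_eq_prod_range, Nat.cast_prod]
        exact Finset.prod_congr rfl fun i hi =>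
          Nat.cast_sub (le_trans (Nat.lt_succ_iff.mp (Nat.lt_succ_of_lt
            (Finset.mem_range.mp hi))) hm) -- i < k ≤ L
      have hchoose : (Nat.choose (L m) k : ℝ)
          = (((L m).descFactorial k : ℕ) : ℝ) / (Nat.factorial k : ℝ) := by
        rw [Nat.descFactorial_eq_factorial_mul_choose]
        push_cast
        field_simp
      rw [Finset.prod_mul_distrib, Finset.prod_const, Finset.card_range, ← hdesc, hchoose]
      ring
    -- limit of (1-ε)^(2(L-k))
    have hlog : Tendsto (fun m => Real.log (1 - ε m) / ε m) atTop (𝓝 (-1)) := by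
      have hd : HasDerivAt (fun x : ℝ => Real.log (1 - x)) (-1) 0 := by
        have h₁ : HasDerivAt (fun x : ℝ => 1 - x) (-1) 0 := by
          simpa using (hasDerivAt_id (0 : ℝ)).const_sub 1
        have h₂ := Real.hasDerivAt_log (show (1 : ℝ) - 0 ≠ 0 by norm_num)
        have h3 : HasDerivAt (fun x : ℝ => Real.log (1 - x)) ((1 - 0)⁻¹ * -1) 0 := h₂.comp 0 h₁
        simpa using h3
      have hslope := hasDerivAt_iff_tendsto_slope.mp hd
      have hεne : Tendsto ε atTop (𝓝[≠] (0 : ℝ)) :=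
        tendsto_nhdsWithin_iff.mpr ⟨hεtend, Eventually.of_forall fun m => by
          simp [(hε0 m).ne']⟩
      have := hslope.comp hεne
      refine this.congr fun m => ?_
      show slope (fun x : ℝ => Real.log (1 - x)) 0 (ε m) = _
      rw [slope_def_field]
      simp [Real.log_one]
    have hNε : Tendsto (fun m => 2 * ((L m : ℝ) - k) * ε m) atTop (𝓝 (2 * lam)) := by
      have : Tendsto (fun m => 2 * ((L m : ℝ) * ε m - (k : ℝ) * ε m)) atTop
          (𝓝 (2 * (lam - k * 0))) := ((hLε.sub (hεtend.const_mul (k : ℝ))).const_mul 2)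
      rw [mul_zero, sub_zero] at this
      exact this.congr fun m => by ring
    have hexparg : Tendsto (fun m => ((2 * (L m - k) : ℕ) : ℝ) * Real.log (1 - ε m))
        atTop (𝓝 (-(2 * lam))) := by
      have := hNε.mul hlog
      rw [show 2 * lam * (-1) = -(2 * lam) by ring] at this
      refine this.congr' ?_
      filter_upwards [hL.eventually_ge_atTop k] with m hm
      have hcast : ((2 * (L m - k) : ℕ) : ℝ) = 2 * ((L m : ℝ) - k) := by
        push_cast [hm]; ring
      rw [← hcast]
      have hεne : ε m ≠ 0 := (hε0 m).ne'
      field_simp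
    have hP : Tendsto (fun m => (1 - ε m) ^ (2 * (L m - k))) atTop
        (𝓝 (Real.exp (-(2 * lam)))) := by
      have := (Real.continuous_exp.continuousAt.tendsto).comp hexparg
      refine this.congr fun m => ?_
      show Real.exp _ = _
      rw [Real.exp_nat_mul, Real.exp_log (by linarith [hε1 m])]
    have := (hCε.pow 2).mul hP
    refine this.congr' ?_
    filter_upwards [hL.eventually_ge_atTop k] with m hm
    rw [hF]
    simp only [if_pos hm]
    ring
  · -- bound
    filter_upwards [hLε.eventually (eventually_le_nhds (lt_add_one lam))] with m hm
    intro k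
    by_cases hk : k ≤ L m
    · have hC : (Nat.choose (L m) k : ℝ) * ε m ^ k ≤ (lam + 1) ^ k / Nat.factorial k := by
        have h1 : (Nat.choose (L m) k : ℝ) * (Nat.factorial k : ℝ) ≤ ((L m : ℝ)) ^ k := by
          have h := Nat.descFactorial_le_pow (L m) k
          rw [Nat.descFactorial_eq_factorial_mul_choose] at h
          rw [mul_comm]
          exact_mod_cast h
        have hfac : (0 : ℝ) < Nat.factorial k := by exact_mod_cast Nat.factorial_pos k
        have h2 : (Nat.choose (L m) k : ℝ) ≤ (L m : ℝ) ^ k / Nat.factorial k := by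
          rw [le_div_iff₀ hfac]; exact h1
        have hε : 0 ≤ ε m ^ k := pow_nonneg (hε0 m).le k
        calc (Nat.choose (L m) k : ℝ) * ε m ^ k
            ≤ ((L m : ℝ) ^ k / Nat.factorial k) * ε m ^ k := by
              exact mul_le_mul_of_nonneg_right h2 hε
          _ = ((L m : ℝ) * ε m) ^ k / Nat.factorial k := by rw [mul_pow]; ring
          _ ≤ (lam + 1) ^ k / Nat.factorial k := by
              exact div_le_div_of_nonneg_right (pow_le_pow_left₀ (mul_nonneg (Nat.cast_nonneg _) (hε0 m).le) hm k) hfac.le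
      have hεnn : (0:ℝ) ≤ ε m := (hε0 m).le
      have h1ε : (0:ℝ) ≤ 1 - ε m := by linarith [hε1 m]
      have hFval : F m k = ((Nat.choose (L m) k : ℝ) * ε m ^ k) ^ 2
          * (1 - ε m) ^ (2 * (L m - k)) := by
        rw [hF]; simp only [if_pos hk]; ring
      rw [hFval]
      have hnn : 0 ≤ ((Nat.choose (L m) k : ℝ) * ε m ^ k) ^ 2
          * (1 - ε m) ^ (2 * (L m - k)) := by positivity
      rw [Real.norm_eq_abs, abs_of_nonneg hnn]
      have hple : (1 - ε m) ^ (2 * (L m - k)) ≤ 1 := pow_le_one₀ h1ε (by linarith)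
      have hsq : ((Nat.choose (L m) k : ℝ) * ε m ^ k) ^ 2
          ≤ ((lam + 1) ^ k / Nat.factorial k) ^ 2 := by
        apply pow_le_pow_left₀ (mul_nonneg (Nat.cast_nonneg _) (by positivity)) hC
      have hfac1 : (1 : ℝ) ≤ Nat.factorial k := by exact_mod_cast (Nat.factorial_pos k)
      calc ((Nat.choose (L m) k : ℝ) * ε m ^ k) ^ 2 * (1 - ε m) ^ (2 * (L m - k))
          ≤ ((lam + 1) ^ k / Nat.factorial k) ^ 2 * 1 := by
            exact mul_le_mul hsq hple (by positivity) (by positivity)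
        _ = (lam + 1) ^ (2 * k) / ((Nat.factorial k : ℝ)) ^ 2 := by
            rw [div_pow, ← pow_mul, mul_comm k 2, mul_one]
        _ ≤ (lam + 1) ^ (2 * k) / Nat.factorial k := by
            apply div_le_div_of_nonneg_left (by positivity) (by positivity)
            nlinarith [hfac1]
        _ = ((lam + 1) ^ 2) ^ k / Nat.factorial k := by rw [← pow_mul]
    · rw [hF]
      simp only [if_neg hk, norm_zero]
      positivity

/-- In the long chain regime `ℓ_m → ∞` (`ℓ_m` even), `q_m → 0`, `ℓ_m q_m → a`,
one has `M^n_H(ℓ_m/2, ℓ_m/2) → φ_n(a) = e^{-an} ∑_{k≥0} (an)^{2k}/(2^{2k}(k!)²)`,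
where `ρ_m = 1 - 2 q_m`. -/
theorem MH_middle_tendsto_phi
    (n : ℕ) (hn : 1 ≤ n) (a : ℝ) (ha : 0 ≤ a)
    (ℓ : ℕ → ℕ) (q : ℕ → ℝ)
    (hℓ : Tendsto ℓ atTop atTop) (heven : ∀ m, Even (ℓ m))
    (hq0 : ∀ m, 0 < q m) (hq1 : ∀ m, q m < 1 / 2)
    (hq : Tendsto q atTop (𝓝 0))
    (hlq : Tendsto (fun m => (ℓ m : ℝ) * q m) atTop (𝓝 a)) :
    Tendsto (fun m => MH (ℓ m) (1 - 2 * q m) n (ℓ m / 2) (ℓ m / 2)) atTop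
      (𝓝 (Real.exp (-a * n) *
        ∑' k : ℕ, (a * n) ^ (2 * k) / (2 ^ (2 * k) * ((Nat.factorial k : ℝ)) ^ 2))) := by

  set L : ℕ → ℕ := fun m => ℓ m / 2 with hLdef
  set ε : ℕ → ℝ := fun m => (1 - (1 - 2 * q m) ^ n) / 2 with hεdef
  set lam : ℝ := a * n / 2 with hlamdef
  have hℓL : ∀ m, ℓ m = 2 * L m := fun m => (Nat.two_mul_div_two_of_even (heven m)).symm
  have hρ0 : ∀ m, (0:ℝ) < 1 - 2 * q m := fun m => by linarith [hq1 m]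
  have hρ1 : ∀ m, (1:ℝ) - 2 * q m < 1 := fun m => by linarith [hq0 m]
  have hε0 : ∀ m, 0 < ε m := by
    intro m
    have := pow_lt_one₀ (hρ0 m).le (hρ1 m) (Nat.one_le_iff_ne_zero.mp hn)
    simp only [hεdef]
    linarith
  have hε1 : ∀ m, ε m < 1 := by
    intro m
    have := pow_pos (hρ0 m) n
    simp only [hεdef]
    linarith
  have hLtop : Tendsto L atTop atTop := by
    rw [tendsto_atTop_atTop] at hℓ ⊢
    intro b
    obtain ⟨N, hN⟩ := hℓ (2 * b)
    exact ⟨N, fun m hm => by have := hN m hm; simp only [hLdef]; omega⟩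
  have hρtend : Tendsto (fun m => 1 - 2 * q m) atTop (𝓝 1) := by
    have := (tendsto_const_nhds (x := (1:ℝ))).sub (hq.const_mul 2)
    simpa using this
  have hstend : Tendsto (fun m => ∑ i ∈ Finset.range n, (1 - 2 * q m) ^ i) atTop
      (𝓝 (n : ℝ)) := by
    have := tendsto_finset_sum (Finset.range n) (fun i _ => hρtend.pow i)
    simpa using this
  have hεq : ∀ m, ε m = q m * ∑ i ∈ Finset.range n, (1 - 2 * q m) ^ i := by
    intro m
    simp only [hεdef]
    linear_combination (1 / 2 : ℝ) * geom_sum_mul (1 - 2 * q m) n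
  have hcastL : ∀ m, (L m : ℝ) = (ℓ m : ℝ) / 2 := by
    intro m
    rw [hℓL m]
    push_cast
    ring
  have hLε : Tendsto (fun m => (L m : ℝ) * ε m) atTop (𝓝 lam) := by
    have h := (hlq.mul hstend).div_const 2
    rw [hlamdef]
    refine h.congr fun m => ?_
    rw [hcastL m, hεq m]
    ring
  have hMH : ∀ m, MH (ℓ m) (1 - 2 * q m) n (ℓ m / 2) (ℓ m / 2)
      = ∑ k ∈ Finset.range (L m + 1),
        (Nat.choose (L m) k : ℝ) ^ 2 * (ε m) ^ (2 * k) * (1 - ε m) ^ (2 * (L m - k)) := by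
    intro m
    have h : MH (ℓ m) (1 - 2 * q m) n (ℓ m / 2) (ℓ m / 2)
        = MH (2 * L m) (1 - 2 * q m) n (L m) (L m) := by rw [← hℓL m]
    rw [h, MH_two_mul]
    refine Finset.sum_congr rfl fun k _ => ?_
    have hA : (1 + (1 - 2 * q m) ^ n) / 2 = 1 - ε m := by simp only [hεdef]; ring
    rw [hA]
  have hmain := key_tendsto lam (by positivity) L ε hε0 hε1 hLtop hLε
  have hval : (∑' k : ℕ, (lam ^ k / (Nat.factorial k : ℝ)) ^ 2 * Real.exp (-(2 * lam)))
      = Real.exp (-a * n) *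
        ∑' k : ℕ, (a * n) ^ (2 * k) / (2 ^ (2 * k) * ((Nat.factorial k : ℝ)) ^ 2) := by
    rw [tsum_mul_right]
    rw [show Real.exp (-(2 * lam)) = Real.exp (-a * n) by rw [hlamdef]; ring_nf]
    rw [mul_comm]
    congr 1
    refine tsum_congr fun k => ?_
    rw [hlamdef, div_pow, ← pow_mul, mul_comm k 2, div_pow, div_div]
  rw [hval] at hmain
  exact hmain.congr fun m => (hMH m).symm
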